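/- arXiv:1202.3329 — 2 statements merged into one kernel-verified Lean document; each statement's English description precedes it below -/
import Mathlib

section
/- If {f_k}_{k=1}^m is a bi-stochastic measurement (Σ_k f_k* f_k = Id and Σ_k f_k f_k* = Id), and σ is a density matrix, then σ majorizes τ := Σ_k f_k σ f_k* in the majorization order on spectra: Sp(σ) ⪰ Sp(τ). -/
open scoped ComplexOrder

open Matrix Finset in
/-- `u` rearranged in decreasing order. -/
noncomputable def sortDesc {n : ℕ} (u : Fin n → ℝ) : Fin n → ℝ :=
  fun i => u (Tuple.sort u i.rev)

open Finset in
/-- `u` majorizes `v`: every partial sum of the decreasing rearrangement of `u`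
dominates that of `v`, and the total sums agree. -/
noncomputable def Majorizes {n : ℕ} (u v : Fin n → ℝ) : Prop :=
  (∀ k : ℕ, ∑ i ∈ Finset.univ.filter (fun i : Fin n => (i : ℕ) < k), sortDesc v i ≤
      ∑ i ∈ Finset.univ.filter (fun i : Fin n => (i : ℕ) < k), sortDesc u i) ∧
  ∑ i, u i = ∑ i, v i



section Aux
open scoped ComplexOrder
open Matrix Finset


/-- The index set `T k` (independent of `u`). -/
def Tset (n k : ℕ) : Finset (Fin n) := univ.filter (fun j : Fin n => (j.rev : ℕ) < k)

noncomputable def topSet {n : ℕ} (u : Fin n → ℝ) (k : ℕ) : Finset (Fin n) :=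
  (Tset n k).image (Tuple.sort u)

lemma card_topSet {n : ℕ} (u : Fin n → ℝ) (k : ℕ) :
    (topSet u k).card = (Tset n k).card :=
  Finset.card_image_of_injective _ (Tuple.sort u).injective

lemma sum_sortDesc {n : ℕ} (u : Fin n → ℝ) (k : ℕ) :
    ∑ i ∈ univ.filter (fun i : Fin n => (i : ℕ) < k), sortDesc u i
      = ∑ i ∈ topSet u k, u i := by
  rw [topSet, Finset.sum_image (fun a _ b _ h => (Tuple.sort u).injective h)]
  apply Finset.sum_nbij' (fun i => Fin.rev i) (fun j => Fin.rev j)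
  · intro a ha
    simp only [Tset, Finset.mem_filter, Finset.mem_univ, true_and, Fin.rev_rev] at *
    exact ha
  · intro a ha
    simp only [Tset, Finset.mem_filter, Finset.mem_univ, true_and] at *
    exact ha
  · intro a _; exact Fin.rev_rev a
  · intro a _; exact Fin.rev_rev a
  · intro a _; simp [sortDesc]

lemma topSet_prop {n : ℕ} (u : Fin n → ℝ) (k : ℕ) :
    ∀ i ∈ topSet u k, ∀ j ∉ topSet u k, u j ≤ u i := by
  intro i hi j hj
  simp only [topSet, Finset.mem_image] at hi
  obtain ⟨a, ha, rfl⟩ := hi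
  set b := (Tuple.sort u).symm j with hb
  have hjb : j = Tuple.sort u b := by simp [hb]
  have hbT : b ∉ Tset n k := by
    intro hmem
    exact hj (Finset.mem_image.mpr ⟨b, hmem, hjb.symm⟩)
  simp only [Tset, Finset.mem_filter, Finset.mem_univ, true_and, not_lt] at ha hbT
  have hba : b ≤ a := by
    have h1 : a.rev < b.rev := by
      rw [Fin.lt_iff_val_lt_val]; omega
    exact le_of_lt (Fin.rev_lt_rev.mp h1)
  rw [hjb]
  exact Tuple.monotone_sort u hba


lemma trace_eq_sum_eigenvalues {n : ℕ} (A : Matrix (Fin n) (Fin n) ℂ) (hA : A.IsHermitian) :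
    A.trace = ∑ i, (hA.eigenvalues i : ℂ) := by
  conv_lhs => rw [hA.spectral_theorem, Unitary.conjStarAlgAut_apply]
  rw [Matrix.trace_mul_cycle]
  rw [(Matrix.mem_unitaryGroup_iff').mp (hA.eigenvectorUnitary).2]
  rw [Matrix.one_mul, Matrix.trace_diagonal]
  norm_num



lemma knapsack {n : ℕ} (lam d : Fin n → ℝ) (S : Finset (Fin n))
    (hd0 : ∀ i, 0 ≤ d i) (hd1 : ∀ i, d i ≤ 1) (hsum : ∑ i, d i = S.card)
    (htop : ∀ i ∈ S, ∀ j ∉ S, lam j ≤ lam i) :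
    ∑ i, lam i * d i ≤ ∑ i ∈ S, lam i := by
  rcases S.eq_empty_or_nonempty with rfl | hS
  · have hd : ∀ i, d i = 0 := by
      intro i
      have h := Finset.sum_eq_zero_iff_of_nonneg (fun i _ => hd0 i) |>.mp (by simpa using hsum)
      exact h i (Finset.mem_univ i)
    simp [hd]
  · set t := S.inf' hS lam with ht
    have htS : ∀ i ∈ S, t ≤ lam i := fun i hi => Finset.inf'_le _ hi
    have htC : ∀ j, j ∉ S → lam j ≤ t := by
      intro j hj
      obtain ⟨i, hi, hti⟩ := Finset.exists_mem_eq_inf' hS lam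
      rw [ht, hti]
      exact htop i hi j hj
    have key : ∑ i, lam i * d i - ∑ i ∈ S, lam i ≤ 0 := by
      have h1 : ∑ i, lam i * d i - ∑ i ∈ S, lam i
          = ∑ i ∈ S, lam i * (d i - 1) + ∑ i ∈ Sᶜ, lam i * d i := by
        rw [← Finset.sum_compl_add_sum S (fun i => lam i * d i)]
        simp [mul_sub, Finset.sum_sub_distrib]
        ring
      have h2 : ∑ i ∈ S, lam i * (d i - 1) ≤ ∑ i ∈ S, t * (d i - 1) := by
        apply Finset.sum_le_sum
        intro i hi
        have : d i - 1 ≤ 0 := by linarith [hd1 i]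
        nlinarith [htS i hi]
      have h3 : ∑ i ∈ Sᶜ, lam i * d i ≤ ∑ i ∈ Sᶜ, t * d i := by
        apply Finset.sum_le_sum
        intro i hi
        have hi' : i ∉ S := by simpa using hi
        nlinarith [hd0 i, htC i hi']
      have h4 : ∑ i ∈ S, t * (d i - 1) + ∑ i ∈ Sᶜ, t * d i = t * (∑ i, d i - S.card) := by
        rw [← Finset.mul_sum, ← Finset.mul_sum, ← mul_add]
        congr 1
        rw [Finset.sum_sub_distrib]
        have : ∑ i, d i = ∑ i ∈ S, d i + ∑ i ∈ Sᶜ, d i := by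
          rw [Finset.sum_add_sum_compl]
        simp [this]
        ring
      rw [h1]
      calc ∑ i ∈ S, lam i * (d i - 1) + ∑ i ∈ Sᶜ, lam i * d i
          ≤ ∑ i ∈ S, t * (d i - 1) + ∑ i ∈ Sᶜ, t * d i := add_le_add h2 h3
        _ = t * (∑ i, d i - S.card) := h4
        _ = 0 := by rw [hsum]; ring
    linarith

variable {n m : ℕ}

-- helpers from c.lean
lemma conj_mul_conj (U : Matrix (Fin n) (Fin n) ℂ) (hU : star U * U = 1)
    (A B : Matrix (Fin n) (Fin n) ℂ) :
    (U * A * star U) * (U * B * star U) = U * (A * B) * star U := by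
  calc (U * A * star U) * (U * B * star U)
      = U * A * (star U * U) * B * star U := by
        simp only [Matrix.mul_assoc]
    _ = U * (A * B) * star U := by rw [hU]; simp only [Matrix.mul_assoc, Matrix.mul_one, Matrix.one_mul]

lemma trace_conj (U : Matrix (Fin n) (Fin n) ℂ) (hU : star U * U = 1)
    (A : Matrix (Fin n) (Fin n) ℂ) :
    (U * A * star U).trace = A.trace := by
  rw [Matrix.trace_mul_cycle, hU, Matrix.one_mul]

lemma psd_diag_re {M : Matrix (Fin n) (Fin n) ℂ} (hM : M.PosSemidef) (i : Fin n) :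
    M i i = ((M i i).re : ℂ) ∧ 0 ≤ (M i i).re := by
  have h := hM.dotProduct_mulVec_nonneg (Pi.single i 1)
  have h2 : dotProduct (star (Pi.single i 1)) (M *ᵥ Pi.single i 1) = M i i := by
    simp [dotProduct, mulVec, Pi.single_apply]
  rw [h2] at h
  rw [Complex.le_def] at h
  simp only [Complex.zero_re, Complex.zero_im] at h
  exact ⟨ (Complex.ext (by simp) (by simp [h.2.symm])), h.1 ⟩

lemma psd_sum {ι : Type*} (s : Finset ι) (g : ι → Matrix (Fin n) (Fin n) ℂ)
    (h : ∀ i ∈ s, (g i).PosSemidef) : (∑ i ∈ s, g i).PosSemidef := by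
  classical
  induction s using Finset.induction with
  | empty => simpa using Matrix.PosSemidef.zero
  | insert _ _ hx ih =>
    rw [Finset.sum_insert hx]
    exact Matrix.PosSemidef.add (h _ (Finset.mem_insert_self _ _))
      (ih (fun i hi => h i (Finset.mem_insert_of_mem hi)))

lemma key_ineq (σ : Matrix (Fin n) (Fin n) ℂ) (hσ : σ.PosSemidef)
    (f : Fin m → Matrix (Fin n) (Fin n) ℂ)
    (hpovm : ∑ k, (f k)ᴴ * f k = 1) (hbis : ∑ k, f k * (f k)ᴴ = 1)
    (τ : Matrix (Fin n) (Fin n) ℂ) (hτ : τ = ∑ k, f k * σ * (f k)ᴴ)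
    (hτh : τ.IsHermitian) (S S' : Finset (Fin n)) (hcard : S.card = S'.card)
    (htop : ∀ i ∈ S', ∀ j ∉ S', hσ.1.eigenvalues j ≤ hσ.1.eigenvalues i) :
    ∑ i ∈ S, hτh.eigenvalues i ≤ ∑ i ∈ S', hσ.1.eigenvalues i := by
  set U : Matrix (Fin n) (Fin n) ℂ := (hτh.eigenvectorUnitary : Matrix (Fin n) (Fin n) ℂ) with hUdef
  set V : Matrix (Fin n) (Fin n) ℂ := (hσ.1.eigenvectorUnitary : Matrix (Fin n) (Fin n) ℂ) with hVdef
  set μ : Fin n → ℝ := hτh.eigenvalues with hμdef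
  set lam : Fin n → ℝ := hσ.1.eigenvalues with hlamdef
  have hUU : star U * U = 1 := (Matrix.mem_unitaryGroup_iff').mp (hτh.eigenvectorUnitary).2
  have hUU' : U * star U = 1 := (Matrix.mem_unitaryGroup_iff).mp (hτh.eigenvectorUnitary).2
  have hVV : star V * V = 1 := (Matrix.mem_unitaryGroup_iff').mp (hσ.1.eigenvectorUnitary).2
  have hVV' : V * star V = 1 := (Matrix.mem_unitaryGroup_iff).mp (hσ.1.eigenvectorUnitary).2
  set δ : Fin n → ℂ := fun i => if i ∈ S then 1 else 0 with hδdef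
  set P : Matrix (Fin n) (Fin n) ℂ := U * diagonal δ * star U with hPdef
  -- P is PSD
  have hdiagδ : (diagonal δ).PosSemidef := by
    apply Matrix.PosSemidef.diagonal
    intro i
    simp only [hδdef]
    split <;> norm_num
  have hP : P.PosSemidef := by
    rw [hPdef, Matrix.star_eq_conjTranspose]
    exact hdiagδ.mul_mul_conjTranspose_same U
  -- 1 - P is PSD
  have h1P : (1 - P).PosSemidef := by
    have h1 : (1 : Matrix (Fin n) (Fin n) ℂ) - P = U * diagonal (fun i => 1 - δ i) * star U := by
      have : diagonal (fun i => 1 - δ i) = 1 - diagonal δ := by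
        ext i j
        rcases eq_or_ne i j with rfl | h
        · simp [Matrix.diagonal_apply, Matrix.one_apply, Matrix.sub_apply]
        · simp [Matrix.diagonal_apply, Matrix.one_apply, Matrix.sub_apply, h]
      rw [this, Matrix.mul_sub, Matrix.mul_one, Matrix.sub_mul, hUU', hPdef]
    rw [h1]
    have hdiag : (diagonal (fun i => 1 - δ i)).PosSemidef := by
      apply Matrix.PosSemidef.diagonal
      intro i
      simp only [hδdef]
      split <;> norm_num
    rw [Matrix.star_eq_conjTranspose]
    exact hdiag.mul_mul_conjTranspose_same U
  set X : Matrix (Fin n) (Fin n) ℂ := ∑ j, (f j)ᴴ * P * (f j) with hXdef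
  have hX : X.PosSemidef :=
    psd_sum _ _ (fun j _ => hP.conjTranspose_mul_mul_same (f j))
  have h1X : ((1 : Matrix (Fin n) (Fin n) ℂ) - X).PosSemidef := by
    have h1 : (1 : Matrix (Fin n) (Fin n) ℂ) - X = ∑ j, (f j)ᴴ * (1 - P) * (f j) := by
      have : ∀ j : Fin m, (f j)ᴴ * (1 - P) * (f j)
          = (f j)ᴴ * (f j) - (f j)ᴴ * P * (f j) := by
        intro j
        rw [Matrix.mul_sub, Matrix.mul_one, Matrix.sub_mul]
      simp_rw [this]
      rw [Finset.sum_sub_distrib, hpovm, hXdef]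
    rw [h1]
    exact psd_sum _ _ (fun j _ => h1P.conjTranspose_mul_mul_same (f j))
  -- trace of X
  have htrP : P.trace = (S.card : ℂ) := by
    rw [hPdef, trace_conj U hUU, Matrix.trace_diagonal]
    simp [hδdef]
  have htrX : X.trace = (S.card : ℂ) := by
    rw [hXdef, Matrix.trace_sum]
    have : ∀ j : Fin m, ((f j)ᴴ * P * (f j)).trace = ((f j) * (f j)ᴴ * P).trace := by
      intro j
      rw [Matrix.trace_mul_cycle]
    simp_rw [this]
    rw [← Matrix.trace_sum, ← Finset.sum_mul, hbis, Matrix.one_mul, htrP]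
  -- trace (P * τ)
  have htrPτ : (P * τ).trace = ((∑ i ∈ S, μ i : ℝ) : ℂ) := by
    conv_lhs => rw [hτh.spectral_theorem, Unitary.conjStarAlgAut_apply]
    rw [hPdef]
    rw [conj_mul_conj U hUU, trace_conj U hUU, Matrix.diagonal_mul_diagonal,
      Matrix.trace_diagonal]
    simp only [hδdef, Function.comp_apply, ite_mul, one_mul, zero_mul]
    rw [Finset.sum_ite_mem, Finset.univ_inter]
    push_cast
    rfl
  -- trace (X * σ) = trace (P * τ)
  have htrXσ : (X * σ).trace = (P * τ).trace := by
    rw [hXdef, Finset.sum_mul, Matrix.trace_sum]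
    have h1 : ∀ j : Fin m, ((f j)ᴴ * P * (f j) * σ).trace
        = (P * (f j * σ * (f j)ᴴ)).trace := by
      intro j
      calc ((f j)ᴴ * P * (f j) * σ).trace
          = (((f j)ᴴ * P) * ((f j) * σ)).trace := by rw [Matrix.mul_assoc]
        _ = (((f j) * σ) * ((f j)ᴴ * P)).trace := Matrix.trace_mul_comm _ _
        _ = ((f j * σ * (f j)ᴴ) * P).trace := by
            rw [Matrix.mul_assoc (f j * σ), ← Matrix.mul_assoc]
        _ = (P * (f j * σ * (f j)ᴴ)).trace := Matrix.trace_mul_comm _ _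
    simp_rw [h1]
    rw [← Matrix.trace_sum, ← Finset.mul_sum, ← hτ]
  -- conjugated operator Y and the weights d
  set Y : Matrix (Fin n) (Fin n) ℂ := star V * X * V with hYdef
  have hY : Y.PosSemidef := by
    rw [hYdef, Matrix.star_eq_conjTranspose]
    exact hX.conjTranspose_mul_mul_same V
  have h1Y : ((1 : Matrix (Fin n) (Fin n) ℂ) - Y).PosSemidef := by
    have : (1 : Matrix (Fin n) (Fin n) ℂ) - Y = star V * (1 - X) * V := by
      rw [Matrix.mul_sub, Matrix.mul_one, Matrix.sub_mul, hVV, hYdef]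
    rw [this, Matrix.star_eq_conjTranspose]
    exact h1X.conjTranspose_mul_mul_same V
  set d : Fin n → ℝ := fun i => (Y i i).re with hddef
  have hYdiag : ∀ i, Y i i = ((d i : ℝ) : ℂ) := fun i => (psd_diag_re hY i).1
  have hd0 : ∀ i, 0 ≤ d i := fun i => (psd_diag_re hY i).2
  have hd1 : ∀ i, d i ≤ 1 := by
    intro i
    have h := (psd_diag_re h1Y i).2
    have h2 : ((1 : Matrix (Fin n) (Fin n) ℂ) - Y) i i = 1 - Y i i := by
      simp [Matrix.sub_apply, Matrix.one_apply]
    rw [h2, hYdiag] at h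
    have : (((1 : ℝ) - d i : ℝ) : ℂ) = 1 - ((d i : ℝ) : ℂ) := by push_cast; ring
    rw [← this] at h
    simp only [Complex.ofReal_re] at h
    linarith
  -- sum of weights
  have htrY : Y.trace = (S.card : ℂ) := by
    rw [hYdef, Matrix.trace_mul_cycle, hVV', Matrix.one_mul, htrX]
  have hsumd : ∑ i, d i = S.card := by
    have h1 : Y.trace = ((∑ i, d i : ℝ) : ℂ) := by
      simp only [Matrix.trace, Matrix.diag]
      push_cast
      exact Finset.sum_congr rfl (fun i _ => hYdiag i)
    rw [htrY] at h1
    exact_mod_cast h1.symm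
  -- trace (X * σ) in terms of the weights
  have htrXσ2 : (X * σ).trace = ((∑ i, d i * lam i : ℝ) : ℂ) := by
    conv_lhs => rw [hσ.1.spectral_theorem, Unitary.conjStarAlgAut_apply]
    have hstep : (X * ((V : Matrix (Fin n) (Fin n) ℂ) * diagonal (RCLike.ofReal ∘ hσ.1.eigenvalues) * star V)).trace
        = (Y * diagonal (RCLike.ofReal ∘ hσ.1.eigenvalues)).trace := by
      set D := diagonal (RCLike.ofReal ∘ hσ.1.eigenvalues : Fin n → ℂ) with hD
      calc (X * (V * D * star V)).trace
          = ((X * (V * D)) * star V).trace := by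
            simp only [Matrix.mul_assoc]
        _ = (star V * (X * (V * D))).trace := Matrix.trace_mul_comm _ _
        _ = (Y * D).trace := by
            rw [hYdef]
            simp only [Matrix.mul_assoc]
    rw [hstep]
    simp only [Matrix.trace, Matrix.diag]
    push_cast
    apply Finset.sum_congr rfl
    intro i _
    rw [Matrix.mul_diagonal, hYdiag]
    simp [hlamdef, mul_comm]
  -- combine
  have hchain : ((∑ i ∈ S, μ i : ℝ) : ℂ) = ((∑ i, d i * lam i : ℝ) : ℂ) := by
    rw [← htrPτ, ← htrXσ, htrXσ2]
  have hchainR : ∑ i ∈ S, μ i = ∑ i, d i * lam i := by exact_mod_cast hchain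
  rw [hchainR]
  have := knapsack lam d S' hd0 hd1 (by rw [hsumd, hcard]) htop
  calc ∑ i, d i * lam i = ∑ i, lam i * d i := by simp [mul_comm]
    _ ≤ ∑ i ∈ S', lam i := this

end Aux

open Matrix in
/-- For a bi-stochastic measurement `{f k}` and a density matrix `σ`, the spectrum of `σ`
majorizes the spectrum of `τ = ∑ k, f k * σ * (f k)ᴴ`. -/
theorem bistochastic_measurement_majorized {n m : ℕ} (σ : Matrix (Fin n) (Fin n) ℂ)
    (hσ : σ.PosSemidef) (hσtr : σ.trace = 1)
    (f : Fin m → Matrix (Fin n) (Fin n) ℂ)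
    (hpovm : ∑ k, (f k)ᴴ * f k = 1) (hbis : ∑ k, f k * (f k)ᴴ = 1)
    (τ : Matrix (Fin n) (Fin n) ℂ) (hτ : τ = ∑ k, f k * σ * (f k)ᴴ)
    (hτh : τ.IsHermitian) :
    Majorizes (hσ.1.eigenvalues) (hτh.eigenvalues) := by
  constructor
  · intro k
    rw [sum_sortDesc hτh.eigenvalues k, sum_sortDesc hσ.1.eigenvalues k]
    exact key_ineq σ hσ f hpovm hbis τ hτ hτh (topSet hτh.eigenvalues k)
      (topSet hσ.1.eigenvalues k) (by rw [card_topSet, card_topSet])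
      (topSet_prop hσ.1.eigenvalues k)
  · have h1 : σ.trace = ∑ i, (hσ.1.eigenvalues i : ℂ) := trace_eq_sum_eigenvalues σ hσ.1
    have h2 : τ.trace = ∑ i, (hτh.eigenvalues i : ℂ) := trace_eq_sum_eigenvalues τ hτh
    have h3 : τ.trace = σ.trace := by
      rw [hτ, Matrix.trace_sum]
      have hc : ∀ j : Fin m, (f j * σ * (f j)ᴴ).trace = ((f j)ᴴ * (f j) * σ).trace :=
        fun j => Matrix.trace_mul_cycle (f j) σ ((f j)ᴴ)
      simp_rw [hc]
      rw [← Matrix.trace_sum, ← Finset.sum_mul, hpovm, Matrix.one_mul]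
    have h4 : ∑ i, (hσ.1.eigenvalues i : ℂ) = ∑ i, (hτh.eigenvalues i : ℂ) := by
      rw [← h1, ← h2, h3]
    exact_mod_cast h4
end

section
/- If σ and τ are density matrices with Sp(σ) ⪰ Sp(τ) (σ majorizes τ), then there exists a bi-stochastic measurement {f_k}_{k=1}^m, i.e., operators with Σ_k f_k* f_k = Id and Σ_k f_k f_k* = Id, such that τ = Σ_k f_k σ f_k* (Uhlmann's theorem, 'only if' direction of the characterization). -/
open scoped ComplexOrder

open Finset


noncomputable def psum {n : ℕ} (x : Fin n → ℝ) (k : ℕ) : ℝ :=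
  ∑ i ∈ Finset.univ.filter (fun i : Fin n => (i : ℕ) < k), x i

lemma psum_succ {n : ℕ} (x : Fin n → ℝ) (k : Fin n) :
    psum x (k + 1) = psum x k + x k := by
  unfold psum
  have h : Finset.univ.filter (fun i : Fin n => (i : ℕ) < (k : ℕ) + 1)
      = insert k (Finset.univ.filter (fun i : Fin n => (i : ℕ) < (k : ℕ))) := by
    ext i
    simp only [mem_filter, mem_univ, true_and, mem_insert, Nat.lt_succ_iff_lt_or_eq,
      Fin.ext_iff, Fin.lt_def]
    omega
  rw [h, Finset.sum_insert (by simp), add_comm]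

/-- `v` is a convex combination of permutations of `u`. -/
def InConvPerm {n : ℕ} (u v : Fin n → ℝ) : Prop :=
  ∃ w : Equiv.Perm (Fin n) → ℝ, (∀ π, 0 ≤ w π) ∧ (∑ π, w π = 1) ∧
    ∀ i, v i = ∑ π, w π * u (π i)

lemma InConvPerm.refl {n : ℕ} (u : Fin n → ℝ) : InConvPerm u u := by
  refine ⟨fun π => if π = 1 then 1 else 0, fun π => by positivity, by simp, fun i => ?_⟩
  rw [Finset.sum_eq_single (1 : Equiv.Perm (Fin n))] <;> simp +contextual

lemma InConvPerm.comp {n : ℕ} (u v : Fin n → ℝ) (α β : Equiv.Perm (Fin n))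
    (h : InConvPerm (u ∘ α) (v ∘ β)) : InConvPerm u v := by
  obtain ⟨w, hw0, hw1, hw⟩ := h
  refine ⟨fun ρ => w (α⁻¹ * ρ * β), fun ρ => hw0 _, ?_, fun i => ?_⟩
  · rw [← hw1]
    exact Fintype.sum_equiv ((Equiv.mulLeft α⁻¹).trans (Equiv.mulRight β)) _ _ (fun π => rfl)
  · have h2 := hw (β⁻¹ i)
    simp only [Function.comp_apply, Equiv.Perm.coe_inv, Equiv.apply_symm_apply] at h2
    rw [h2]
    refine Fintype.sum_equiv ((Equiv.mulLeft α).trans (Equiv.mulRight β⁻¹)) _ _ (fun π => ?_)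
    have h3 : α⁻¹ * (α * π * β⁻¹) * β = π := by group
    simp only [Equiv.trans_apply, Equiv.coe_mulLeft, Equiv.coe_mulRight, h3]
    rfl

lemma InConvPerm.step {n : ℕ} (u v : Fin n → ℝ) (s : Equiv.Perm (Fin n)) (θ : ℝ)
    (hθ0 : 0 ≤ θ) (hθ1 : θ ≤ 1)
    (h : InConvPerm (fun i => (1 - θ) * u i + θ * u (s i)) v) : InConvPerm u v := by
  obtain ⟨w, hw0, hw1, hw⟩ := h
  have h2 : ∑ π : Equiv.Perm (Fin n), w (s⁻¹ * π) = 1 := by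
    rw [← hw1]
    exact Fintype.sum_equiv (Equiv.mulLeft s⁻¹) _ _ (fun π => rfl)
  refine ⟨fun ρ => (1 - θ) * w ρ + θ * w (s⁻¹ * ρ), fun ρ => by
      have := hw0 ρ; have := hw0 (s⁻¹ * ρ); nlinarith, ?_, fun i => ?_⟩
  · rw [Finset.sum_add_distrib, ← Finset.mul_sum, ← Finset.mul_sum, hw1, h2]; ring
  · rw [hw i]
    rw [Finset.sum_congr rfl (fun π _ => (mul_add (w π) _ _)), Finset.sum_add_distrib,
      Finset.sum_congr rfl (g := fun ρ => ((1 - θ) * w ρ + θ * w (s⁻¹ * ρ)) * u (ρ i))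
      (fun π _ => rfl),
      Finset.sum_congr rfl (fun π _ => (add_mul ((1-θ) * w π) (θ * w (s⁻¹ * π)) _)),
      Finset.sum_add_distrib]
    congr 1
    · exact Finset.sum_congr rfl (fun π _ => by ring)
    · refine Fintype.sum_equiv (Equiv.mulLeft s⁻¹).symm _ _ (fun π => ?_)
      simp only [Equiv.mulLeft_symm, Equiv.coe_mulLeft, inv_inv]
      have h3 : s⁻¹ * (s * π) = π := by group
      have h4 : (s * π) i = s (π i) := rfl
      rw [h3, h4]; ring

lemma psum_eq_sum {n : ℕ} (x : Fin n → ℝ) {m : ℕ} (h : n ≤ m) : psum x m = ∑ i, x i := by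
  unfold psum
  congr 1
  ext i
  simp only [mem_filter, mem_univ, true_and, iff_true]
  exact lt_of_lt_of_le i.isLt h

lemma hlp_aux (d : ℕ) : ∀ {n : ℕ} (x y : Fin n → ℝ), Antitone x → Antitone y →
    (∀ k, psum y k ≤ psum x k) → (∑ i, x i = ∑ i, y i) →
    (Finset.univ.filter (fun i => x i ≠ y i)).card ≤ d → InConvPerm x y := by
  induction d with
  | zero =>
    intro n x y hx hy hps hsum hcard
    have hxy : x = y := by
      funext i
      by_contra h
      have : i ∈ Finset.univ.filter (fun i => x i ≠ y i) := by simp [h]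
      have := Finset.card_pos.2 ⟨i, this⟩
      omega
    exact hxy ▸ InConvPerm.refl x
  | succ d ih =>
    intro n x y hx hy hps hsum hcard
    by_cases hxy : x = y
    · exact hxy ▸ InConvPerm.refl x
    -- there is an index where y < x
    have hne : ∃ i, x i ≠ y i := by
      by_contra h
      push_neg at h
      exact hxy (funext h)
    have hJne : (Finset.univ.filter (fun i => y i < x i)).Nonempty := by
      by_contra hc
      rw [Finset.not_nonempty_iff_eq_empty, Finset.filter_eq_empty_iff] at hc
      obtain ⟨i0, hi0⟩ := hne
      have hlt : ∀ i ∈ Finset.univ, x i ≤ y i := fun i _ => le_of_not_gt (hc (mem_univ i))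
      have : ∑ i, x i < ∑ i, y i :=
        Finset.sum_lt_sum hlt ⟨i0, mem_univ i0, lt_of_le_of_ne (hlt i0 (mem_univ i0)) hi0⟩
      linarith
    set J := Finset.univ.filter (fun i => y i < x i) with hJ
    set j := J.max' hJne with hjdef
    have hFj : y j < x j := (Finset.mem_filter.mp (J.max'_mem hJne)).2
    have hF1 : ∀ l, j < l → x l ≤ y l := by
      intro l hl
      by_contra hc
      push_neg at hc
      have : l ∈ J := by rw [hJ, mem_filter]; exact ⟨mem_univ l, hc⟩
      exact absurd (J.le_max' l this) (not_le.2 hl)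
    -- there is an index k > j with x k < y k
    have hKne : (Finset.univ.filter (fun l => j < l ∧ x l < y l)).Nonempty := by
      by_contra hc
      rw [Finset.not_nonempty_iff_eq_empty, Finset.filter_eq_empty_iff] at hc
      have hc' : ∀ l, j < l → y l ≤ x l := by
        intro l hl
        by_contra h
        push_neg at h
        exact hc (mem_univ l) ⟨hl, h⟩
      have hsplit_x := Finset.sum_filter_add_sum_filter_not Finset.univ
        (fun i : Fin n => (i : ℕ) < (j : ℕ) + 1) x
      have hsplit_y := Finset.sum_filter_add_sum_filter_not Finset.univ
        (fun i : Fin n => (i : ℕ) < (j : ℕ) + 1) y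
      have hrest : ∑ i ∈ Finset.univ.filter (fun i : Fin n => ¬ (i : ℕ) < (j : ℕ) + 1), y i ≤
          ∑ i ∈ Finset.univ.filter (fun i : Fin n => ¬ (i : ℕ) < (j : ℕ) + 1), x i := by
        refine Finset.sum_le_sum fun i hi => ?_
        rw [mem_filter] at hi
        refine hc' i ?_
        rw [Fin.lt_def]
        omega
      have hps1 : psum y ((j : ℕ) + 1) < psum x ((j : ℕ) + 1) := by
        rw [psum_succ, psum_succ]
        have := hps (j : ℕ)
        linarith
      have : ∑ i, y i < ∑ i, x i := by
        rw [← hsplit_x, ← hsplit_y]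
        have e1 : ∑ i ∈ Finset.univ.filter (fun i : Fin n => (i : ℕ) < (j : ℕ) + 1), x i
            = psum x ((j : ℕ) + 1) := rfl
        have e2 : ∑ i ∈ Finset.univ.filter (fun i : Fin n => (i : ℕ) < (j : ℕ) + 1), y i
            = psum y ((j : ℕ) + 1) := rfl
        rw [e1, e2]
        linarith
      linarith
    set K := Finset.univ.filter (fun l => j < l ∧ x l < y l) with hK
    set k := K.min' hKne with hkdef
    have hkK : j < k ∧ x k < y k := (Finset.mem_filter.mp (K.min'_mem hKne)).2
    obtain ⟨hjk, hFk⟩ := hkK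
    have hF2 : ∀ l, j < l → l < k → x l = y l := by
      intro l h1 h2
      refine le_antisymm (hF1 l h1) ?_
      by_contra hc
      push_neg at hc
      have : l ∈ K := by rw [hK, mem_filter]; exact ⟨mem_univ l, h1, hc⟩
      exact absurd (K.min'_le l this) (not_le.2 h2)
    set a := x j - y j with hadef
    set b := y k - x k with hbdef
    set δ := min a b with hδdef
    have ha : 0 < a := by simp [hadef]; linarith
    have hb : 0 < b := by simp [hbdef]; linarith
    have hδ0 : 0 < δ := lt_min ha hb
    have hδa : δ ≤ a := min_le_left _ _
    have hδb : δ ≤ b := min_le_right _ _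
    have hyjk : y k ≤ y j := hy (le_of_lt hjk)
    have hjkx : x k < x j := by linarith
    set θ := δ / (x j - x k) with hθdef
    have hθ0 : 0 ≤ θ := le_of_lt (div_pos hδ0 (by linarith))
    have hθ1 : θ ≤ 1 := by
      rw [hθdef, div_le_one (by linarith)]
      linarith
    set s := Equiv.swap j k with hsdef
    set x' := fun i => (1 - θ) * x i + θ * x (s i) with hx'def
    have hθδ : θ * (x j - x k) = δ := by
      rw [hθdef, div_mul_eq_mul_div, mul_div_assoc, div_self (by linarith), mul_one]
    have hx'j : x' j = x j - δ := by
      have hsj : s j = k := Equiv.swap_apply_left j k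
      rw [hx'def]
      simp only [hsj]
      linarith [hθδ]
    have hx'k : x' k = x k + δ := by
      have hsk : s k = j := Equiv.swap_apply_right j k
      rw [hx'def]
      simp only [hsk]
      linarith [hθδ]
    have hx'o : ∀ i, i ≠ j → i ≠ k → x' i = x i := by
      intro i h1 h2
      rw [hx'def]
      simp only [hsdef, Equiv.swap_apply_of_ne_of_ne h1 h2]
      ring
    -- x' is antitone
    have hx'anti : Antitone x' := by
      intro i1 i2 h12
      rcases eq_or_lt_of_le h12 with rfl | h12
      · exact le_refl _
      by_cases e2j : i2 = j
      · subst e2j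
        have h1j : i1 ≠ j := ne_of_lt h12
        have h1k : i1 ≠ k := ne_of_lt (lt_trans h12 hjk)
        rw [hx'o i1 h1j h1k, hx'j]
        have := hx (le_of_lt h12)
        linarith
      by_cases e2k : i2 = k
      · subst e2k
        rw [hx'k]
        by_cases e1j : i1 = j
        · subst e1j
          rw [hx'j]
          linarith
        rcases lt_or_gt_of_ne e1j with hlt | hgt
        · rw [hx'o i1 e1j (ne_of_lt h12)]
          have := hx (le_of_lt hlt)
          linarith
        · rw [hx'o i1 e1j (ne_of_lt h12), hF2 i1 hgt h12]
          have := hy (le_of_lt h12)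
          linarith
      by_cases e1j : i1 = j
      · subst e1j
        rw [hx'j, hx'o i2 (ne_of_gt h12) e2k]
        have := hF1 i2 h12
        have := hy (le_of_lt h12)
        linarith
      by_cases e1k : i1 = k
      · subst e1k
        rw [hx'k, hx'o i2 (ne_of_gt (lt_trans hjk h12)) e2k]
        have := hx (le_of_lt h12)
        linarith
      · rw [hx'o i1 e1j e1k, hx'o i2 e2j e2k]
        exact hx (le_of_lt h12)
    -- explicit form of x'
    have hx'fun : x' = fun i => x i + ((if i = k then δ else 0) - (if i = j then δ else 0)) := by
      funext i
      by_cases h1 : i = j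
      · subst h1
        rw [hx'j, if_neg (ne_of_lt hjk), if_pos rfl]
        ring
      by_cases h2 : i = k
      · subst h2
        rw [hx'k]
        simp [h1]
      · rw [hx'o i h1 h2]
        simp [h1, h2]
    -- partial sums of x'
    have hpsum' : ∀ m, psum x' m =
        psum x m + ((if (k : ℕ) < m then δ else 0) - (if (j : ℕ) < m then δ else 0)) := by
      intro m
      unfold psum
      rw [hx'fun]
      rw [Finset.sum_add_distrib, Finset.sum_sub_distrib,
        Finset.sum_ite_eq' _ k (fun _ => δ), Finset.sum_ite_eq' _ j (fun _ => δ)]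
      simp only [mem_filter, mem_univ, true_and]
    have hkey : ∀ m, (j : ℕ) + 1 ≤ m → m ≤ (k : ℕ) → a ≤ psum x m - psum y m := by
      refine Nat.le_induction ?_ ?_
      · intro _
        rw [psum_succ, psum_succ]
        have := hps (j : ℕ)
        linarith
      · intro m hm ihm hmk
        have hmk' : m < (k : ℕ) := by omega
        have hmn : m < n := lt_trans hmk' k.isLt
        have hxl : x ⟨m, hmn⟩ = y ⟨m, hmn⟩ := by
          refine hF2 ⟨m, hmn⟩ ?_ ?_
          · rw [Fin.lt_def]; simpa using by omega
          · rw [Fin.lt_def]; simpa using hmk'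
        have e1 := psum_succ x ⟨m, hmn⟩
        have e2 := psum_succ y ⟨m, hmn⟩
        simp only [] at e1 e2
        rw [e1, e2, hxl]
        have := ihm (le_of_lt hmk')
        linarith
    have hps' : ∀ m, psum y m ≤ psum x' m := by
      intro m
      rw [hpsum' m]
      by_cases h1 : (k : ℕ) < m
      · have h2 : (j : ℕ) < m := lt_trans hjk h1
        rw [if_pos h1, if_pos h2]
        have := hps m
        linarith
      by_cases h2 : (j : ℕ) < m
      · rw [if_neg h1, if_pos h2]
        have := hkey m h2 (by omega)
        linarith
      · rw [if_neg h1, if_neg h2]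
        have := hps m
        linarith
    have hsum' : ∑ i, x' i = ∑ i, y i := by
      have e1 : psum x' n = ∑ i, x' i := psum_eq_sum x' (le_refl n)
      have e2 : psum x n = ∑ i, x i := psum_eq_sum x (le_refl n)
      have := hpsum' n
      simp only [k.isLt, j.isLt, if_pos] at this
      rw [e1, e2] at this
      rw [this, hsum]
      ring
    -- cardinality decreases
    have hsub : Finset.univ.filter (fun i => x' i ≠ y i) ⊂
        Finset.univ.filter (fun i => x i ≠ y i) := by
      constructor
      · intro i hi
        rw [mem_filter] at hi ⊢
        refine ⟨mem_univ i, ?_⟩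
        by_cases h1 : i = j
        · subst h1; exact ne_of_gt hFj
        by_cases h2 : i = k
        · subst h2; exact ne_of_lt hFk
        · rw [← hx'o i h1 h2]; exact hi.2
      · rw [Finset.not_subset]
        rcases le_or_gt a b with hab | hab
        · refine ⟨j, by simp [ne_of_gt hFj], ?_⟩
          simp only [mem_filter, mem_univ, true_and, not_not]
          rw [hx'j, hδdef, min_eq_left hab, hadef]
          ring
        · refine ⟨k, by simp [ne_of_lt hFk], ?_⟩
          simp only [mem_filter, mem_univ, true_and, not_not]
          rw [hx'k, hδdef, min_eq_right (le_of_lt hab), hbdef]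
          ring
    have hcard' : (Finset.univ.filter (fun i => x' i ≠ y i)).card ≤ d := by
      have := Finset.card_lt_card hsub
      omega
    exact InConvPerm.step x y s θ hθ0 hθ1 (ih x' y hx'anti hy hps' hsum' hcard')

lemma sortDesc_eq_comp {n : ℕ} (u : Fin n → ℝ) :
    sortDesc u = u ∘ (Tuple.sort u * (Fin.revPerm : Equiv.Perm (Fin n))) := rfl

lemma sortDesc_antitone {n : ℕ} (u : Fin n → ℝ) : Antitone (sortDesc u) := by
  intro i j hij
  have hm := Tuple.monotone_sort u
  have hr : j.rev ≤ i.rev := by rwa [Fin.rev_le_rev]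
  exact hm hr

lemma sortDesc_sum {n : ℕ} (u : Fin n → ℝ) : ∑ i, sortDesc u i = ∑ i, u i := by
  rw [sortDesc_eq_comp]
  exact Equiv.sum_comp (Tuple.sort u * (Fin.revPerm : Equiv.Perm (Fin n))) u

open Matrix

noncomputable def permMat {n : ℕ} (π : Equiv.Perm (Fin n)) : Matrix (Fin n) (Fin n) ℂ :=
  π.toPEquiv.toMatrix

lemma permMat_conjTranspose {n : ℕ} (π : Equiv.Perm (Fin n)) :
    (permMat π)ᴴ = permMat π⁻¹ := by
  have h : (permMat π)ᵀ = permMat π⁻¹ := by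
    rw [permMat, permMat, ← PEquiv.toMatrix_symm, ← Equiv.toPEquiv_symm]
    rfl
  rw [← h]
  ext i j
  simp only [conjTranspose_apply, transpose_apply, permMat, PEquiv.toMatrix_apply,
    Equiv.toPEquiv_apply, Option.mem_def, Option.some.injEq]
  split <;> simp

lemma permMat_mul_inv {n : ℕ} (π : Equiv.Perm (Fin n)) :
    permMat π * permMat π⁻¹ = 1 := by
  rw [permMat, permMat, ← PEquiv.toMatrix_trans, ← Equiv.toPEquiv_trans]
  have : π.trans π⁻¹ = Equiv.refl (Fin n) := Equiv.self_trans_symm π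
  rw [this, Equiv.toPEquiv_refl, PEquiv.toMatrix_refl]

lemma permMat_mul_conjTranspose {n : ℕ} (π : Equiv.Perm (Fin n)) :
    permMat π * (permMat π)ᴴ = 1 := by
  rw [permMat_conjTranspose, permMat_mul_inv]

lemma permMat_conjTranspose_mul {n : ℕ} (π : Equiv.Perm (Fin n)) :
    (permMat π)ᴴ * permMat π = 1 := by
  rw [permMat_conjTranspose]
  have := permMat_mul_inv π⁻¹
  rwa [inv_inv] at this

lemma permMat_diag {n : ℕ} (π : Equiv.Perm (Fin n)) (c : Fin n → ℂ) :
    permMat π * diagonal c * (permMat π)ᴴ = diagonal (c ∘ π) := by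
  rw [permMat_conjTranspose, permMat, permMat, PEquiv.toMatrix_toPEquiv_mul,
    PEquiv.mul_toMatrix_toPEquiv]
  ext i j
  have hss : ⇑(π⁻¹ : Equiv.Perm (Fin n)).symm = ⇑π := by
    ext a
    simp [Equiv.Perm.inv_def]
  simp only [submatrix_apply, id_eq, hss, diagonal_apply, Function.comp_apply]
  by_cases h : i = j
  · subst h; simp
  · rw [if_neg (fun hc => h (π.injective hc)), if_neg h]


lemma majorizes_inConvPerm {n : ℕ} (u v : Fin n → ℝ) (h : Majorizes u v) :
    InConvPerm u v := by
  have h1 : InConvPerm (sortDesc u) (sortDesc v) := by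
    refine hlp_aux (Finset.univ.filter (fun i => sortDesc u i ≠ sortDesc v i)).card
      (sortDesc u) (sortDesc v) (sortDesc_antitone u) (sortDesc_antitone v)
      (fun k => h.1 k) ?_ (le_refl _)
    rw [sortDesc_sum, sortDesc_sum, h.2]
  rw [sortDesc_eq_comp u, sortDesc_eq_comp v] at h1
  exact InConvPerm.comp u v _ _ h1

open Matrix in
/-- Uhlmann: if the spectrum of the density matrix `σ` majorizes that of `τ`, then `τ` is
obtained from `σ` by a bi-stochastic measurement. -/
theorem exists_bistochastic_measurement_of_majorizes {n : ℕ}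
    (σ τ : Matrix (Fin n) (Fin n) ℂ)
    (hσ : σ.PosSemidef) (hσtr : σ.trace = 1)
    (hτ : τ.PosSemidef) (hτtr : τ.trace = 1)
    (hmaj : Majorizes (hσ.1.eigenvalues) (hτ.1.eigenvalues)) :
    ∃ (m : ℕ) (f : Fin m → Matrix (Fin n) (Fin n) ℂ),
      (∑ k, (f k)ᴴ * f k = 1) ∧ (∑ k, f k * (f k)ᴴ = 1) ∧
      τ = ∑ k, f k * σ * (f k)ᴴ := by
  classical
  obtain ⟨w, hw0, hw1, hw⟩ := majorizes_inConvPerm _ _ hmaj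
  set U : Matrix (Fin n) (Fin n) ℂ := ↑(Matrix.IsHermitian.eigenvectorUnitary hσ.1) with hUdef
  set V : Matrix (Fin n) (Fin n) ℂ := ↑(Matrix.IsHermitian.eigenvectorUnitary hτ.1) with hVdef
  have hU1 : Uᴴ * U = 1 := by
    simpa [hUdef, Matrix.star_eq_conjTranspose] using
      Matrix.mem_unitaryGroup_iff'.mp (Matrix.IsHermitian.eigenvectorUnitary hσ.1).2
  have hU2 : U * Uᴴ = 1 := by
    simpa [hUdef, Matrix.star_eq_conjTranspose] using
      Matrix.mem_unitaryGroup_iff.mp (Matrix.IsHermitian.eigenvectorUnitary hσ.1).2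
  have hV1 : Vᴴ * V = 1 := by
    simpa [hVdef, Matrix.star_eq_conjTranspose] using
      Matrix.mem_unitaryGroup_iff'.mp (Matrix.IsHermitian.eigenvectorUnitary hτ.1).2
  have hV2 : V * Vᴴ = 1 := by
    simpa [hVdef, Matrix.star_eq_conjTranspose] using
      Matrix.mem_unitaryGroup_iff.mp (Matrix.IsHermitian.eigenvectorUnitary hτ.1).2
  have hσspec : σ = U * diagonal (RCLike.ofReal ∘ hσ.1.eigenvalues) * Uᴴ := by
    simpa [hUdef, Matrix.star_eq_conjTranspose] using hσ.1.spectral_theorem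
  have hτspec : τ = V * diagonal (RCLike.ofReal ∘ hτ.1.eigenvalues) * Vᴴ := by
    simpa [hVdef, Matrix.star_eq_conjTranspose] using hτ.1.spectral_theorem
  set e : Fin (Fintype.card (Equiv.Perm (Fin n))) ≃ Equiv.Perm (Fin n) :=
    (Fintype.equivFin _).symm with hedef
  have hstar : ∀ r : ℝ, star ((r : ℝ) : ℂ) = ((r : ℝ) : ℂ) := fun r => by
    rw [Complex.star_def, Complex.conj_ofReal]
  have hsq : ∀ π : Equiv.Perm (Fin n),
      ((Real.sqrt (w π) : ℝ) : ℂ) * ((Real.sqrt (w π) : ℝ) : ℂ) = ((w π : ℝ) : ℂ) := by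
    intro π
    rw [← Complex.ofReal_mul, Real.mul_self_sqrt (hw0 π)]
  have hMH : ∀ π : Equiv.Perm (Fin n),
      (V * permMat π * Uᴴ)ᴴ = U * (permMat π)ᴴ * Vᴴ := by
    intro π
    simp [conjTranspose_mul, Matrix.mul_assoc]
  have hMM : ∀ π : Equiv.Perm (Fin n),
      (V * permMat π * Uᴴ)ᴴ * (V * permMat π * Uᴴ) = 1 := by
    intro π
    rw [hMH]
    simp only [Matrix.mul_assoc]
    rw [← Matrix.mul_assoc Vᴴ V, hV1, Matrix.one_mul,
      ← Matrix.mul_assoc (permMat π)ᴴ (permMat π), permMat_conjTranspose_mul, Matrix.one_mul, hU2]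
  have hMM' : ∀ π : Equiv.Perm (Fin n),
      (V * permMat π * Uᴴ) * (V * permMat π * Uᴴ)ᴴ = 1 := by
    intro π
    rw [hMH]
    simp only [Matrix.mul_assoc]
    rw [← Matrix.mul_assoc Uᴴ U, hU1, Matrix.one_mul,
      ← Matrix.mul_assoc (permMat π) (permMat π)ᴴ, permMat_mul_conjTranspose, Matrix.one_mul, hV2]
  have hsum1 : ∑ k, ((w (e k) : ℝ) : ℂ) = 1 := by
    rw [← Complex.ofReal_sum, Equiv.sum_comp e w, hw1, Complex.ofReal_one]
  refine ⟨Fintype.card (Equiv.Perm (Fin n)),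
    fun k => ((Real.sqrt (w (e k)) : ℝ) : ℂ) • (V * permMat (e k) * Uᴴ), ?_, ?_, ?_⟩
  · have hterm : ∀ k, (((Real.sqrt (w (e k)) : ℝ) : ℂ) • (V * permMat (e k) * Uᴴ))ᴴ *
        (((Real.sqrt (w (e k)) : ℝ) : ℂ) • (V * permMat (e k) * Uᴴ)) =
        ((w (e k) : ℝ) : ℂ) • (1 : Matrix (Fin n) (Fin n) ℂ) := by
      intro k
      rw [conjTranspose_smul, smul_mul_assoc, mul_smul_comm, smul_smul, hMM, hstar, hsq]
    rw [Finset.sum_congr rfl (fun k _ => hterm k), ← Finset.sum_smul, hsum1, one_smul]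
  · have hterm : ∀ k, (((Real.sqrt (w (e k)) : ℝ) : ℂ) • (V * permMat (e k) * Uᴴ)) *
        (((Real.sqrt (w (e k)) : ℝ) : ℂ) • (V * permMat (e k) * Uᴴ))ᴴ =
        ((w (e k) : ℝ) : ℂ) • (1 : Matrix (Fin n) (Fin n) ℂ) := by
      intro k
      rw [conjTranspose_smul, smul_mul_assoc, mul_smul_comm, smul_smul, hMM', hstar,
        mul_comm, hsq]
    rw [Finset.sum_congr rfl (fun k _ => hterm k), ← Finset.sum_smul, hsum1, one_smul]
  · have hconj : ∀ (π : Equiv.Perm (Fin n)) (d : Fin n → ℝ),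
        (V * permMat π * Uᴴ) * (U * diagonal (RCLike.ofReal ∘ d) * Uᴴ) *
          (V * permMat π * Uᴴ)ᴴ =
        V * diagonal ((RCLike.ofReal ∘ d) ∘ ⇑π) * Vᴴ := by
      intro π d
      rw [hMH, ← permMat_diag π (RCLike.ofReal ∘ d), permMat_conjTranspose]
      simp only [Matrix.mul_assoc]
      rw [← Matrix.mul_assoc Uᴴ U, hU1, Matrix.one_mul, ← Matrix.mul_assoc Uᴴ U, hU1,
        Matrix.one_mul]
    have hterm : ∀ k, (((Real.sqrt (w (e k)) : ℝ) : ℂ) • (V * permMat (e k) * Uᴴ)) *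
        (U * diagonal (RCLike.ofReal ∘ hσ.1.eigenvalues) * Uᴴ) *
        (((Real.sqrt (w (e k)) : ℝ) : ℂ) • (V * permMat (e k) * Uᴴ))ᴴ =
        ((w (e k) : ℝ) : ℂ) •
          (V * diagonal ((RCLike.ofReal ∘ hσ.1.eigenvalues) ∘ ⇑(e k)) * Vᴴ) := by
      intro k
      rw [conjTranspose_smul, smul_mul_assoc, smul_mul_assoc, mul_smul_comm, smul_smul,
        hstar, hsq, hconj]
    rw [hσspec, Finset.sum_congr rfl (fun k _ => hterm k)]
    have hfold : ∑ k, ((w (e k) : ℝ) : ℂ) •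
        (V * diagonal ((RCLike.ofReal ∘ hσ.1.eigenvalues) ∘ ⇑(e k)) * Vᴴ) =
        V * (∑ k, ((w (e k) : ℝ) : ℂ) •
          diagonal ((RCLike.ofReal ∘ hσ.1.eigenvalues) ∘ ⇑(e k))) * Vᴴ := by
      symm
      rw [Matrix.mul_sum, Matrix.sum_mul]
      exact Finset.sum_congr rfl (fun k _ => by rw [mul_smul_comm, smul_mul_assoc])
    rw [hfold]
    have hdiag : ∑ k, ((w (e k) : ℝ) : ℂ) •
        (diagonal ((RCLike.ofReal ∘ hσ.1.eigenvalues) ∘ ⇑(e k)) : Matrix (Fin n) (Fin n) ℂ) =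
        (diagonal (RCLike.ofReal ∘ hτ.1.eigenvalues) : Matrix (Fin n) (Fin n) ℂ) := by
      ext i jj
      simp only [Matrix.sum_apply, Matrix.smul_apply, diagonal_apply, Function.comp_apply,
        smul_eq_mul, mul_ite, mul_zero]
      by_cases h : i = jj
      · subst h
        simp only [if_pos rfl, if_true]
        have h2 : hτ.1.eigenvalues i = ∑ x, w (e x) * hσ.1.eigenvalues ((e x) i) := by
          rw [hw i, ← Equiv.sum_comp e (fun π => w π * hσ.1.eigenvalues (π i))]
        rw [h2]
        push_cast
        rfl
      · simp [h]
    rw [hdiag, ← hτspec]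
end
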